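/- Let G be a group of order d acting on itself by right multiplication, let m ≥ d. The map sending a class [(h_1,...,h_{m-d})] ∈ S(G,m-d) to [(h_1,...,h_{m-d},g_1,...,g_d)] ∈ S(G,m) (where {g_1,...,g_d} is an enumeration of all of G) is injective. Consequently #S(G,m) - #S(G,m-d) = #S'(G,m), where S'(G,m) is the set of classes in S(G,m) whose representing multisets have at most d-1 distinct elements. -/

import Mathlib

set_option linter.unusedSectionVars false

def SGmRel (G : Type*) [Group G] (m : ℕ) (a b : Fin m → G) : Prop :=
  ∃ (σ : Equiv.Perm (Fin m)) (g : G), ∀ r, b r = a (σ r) * g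

def SGm (G : Type*) [Group G] (m : ℕ) : Type _ :=
  Quot (SGmRel G m)

lemma ofFn_perm_exists {α : Type*} : ∀ {n : ℕ} (a b : Fin n → α),
    (List.ofFn a).Perm (List.ofFn b) → ∃ σ : Equiv.Perm (Fin n), ∀ i, b i = a (σ i) := by
  intro n
  induction n with
  | zero => exact fun a b _ => ⟨1, fun i => i.elim0⟩
  | succ n ih =>
    intro a b hp
    have hb0 : b 0 ∈ List.ofFn a := hp.symm.mem_iff.mp (by simp [List.mem_ofFn])
    obtain ⟨j, hj⟩ := List.mem_ofFn.mp hb0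
    set τ : Equiv.Perm (Fin (n+1)) := Equiv.swap 0 j with hτ
    have hp2 : (List.ofFn (a ∘ τ)).Perm (List.ofFn b) := (τ.ofFn_comp_perm a).trans hp
    have h0 : (a ∘ τ) 0 = b 0 := by simp [hτ, Equiv.swap_apply_left, hj]
    rw [List.ofFn_succ, List.ofFn_succ, h0] at hp2
    obtain ⟨σ', hσ'⟩ := ih (fun i => (a ∘ τ) i.succ) (fun i => b i.succ) hp2.cons_inv
    refine ⟨(Equiv.Perm.decomposeFin.symm (0, σ')).trans τ, fun i => ?_⟩
    refine Fin.cases ?_ (fun i => ?_) i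
    · simpa using h0.symm
    · simpa using hσ' i

section
variable {G : Type*} [Group G]

lemma sgm_rel_iff {m : ℕ} (a b : Fin m → G) :
    SGmRel G m a b ↔ ∃ g : G,
      ((List.ofFn b : Multiset G)) = (List.ofFn (fun i => a i * g) : Multiset G) := by
  constructor
  · rintro ⟨σ, g, hb⟩
    refine ⟨g, ?_⟩
    have hb' : b = (fun i => a i * g) ∘ σ := funext hb
    rw [hb', Multiset.coe_eq_coe]
    exact σ.ofFn_comp_perm _
  · rintro ⟨g, hg⟩
    rw [Multiset.coe_eq_coe] at hg
    obtain ⟨σ, hσ⟩ := ofFn_perm_exists _ _ hg.symm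
    exact ⟨σ, g, hσ⟩

lemma sgm_equiv {m : ℕ} : Equivalence (SGmRel G m) where
  refl a := ⟨1, 1, by simp⟩
  symm := by
    rintro a b ⟨σ, g, h⟩
    exact ⟨σ.symm, g⁻¹, fun r => by rw [h (σ.symm r)]; simp⟩
  trans := by
    rintro a b c ⟨σ, g, h⟩ ⟨τ, k, h'⟩
    exact ⟨τ.trans σ, g * k, fun r => by rw [h' r, h (τ r), mul_assoc]; rfl⟩

lemma sgm_mk_eq_iff {m : ℕ} (a b : Fin m → G) :
    Quot.mk (SGmRel G m) a = Quot.mk (SGmRel G m) b ↔ SGmRel G m a b :=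
  Quot.eq.trans sgm_equiv.eqvGen_iff

lemma ofFn_cast_eq {α : Type*} {n n' : ℕ} (hh : n = n') (F : Fin n' → α) :
    List.ofFn (fun i : Fin n => F (Fin.cast hh i)) = List.ofFn F := by
  subst hh; rfl

lemma ofFn_mul_eq {n : ℕ} (f : Fin n → G) (g : G) :
    (List.ofFn (fun i => f i * g) : Multiset G) = Multiset.map (· * g) (List.ofFn f) := by
  rw [Multiset.map_coe, List.map_ofFn]; rfl

variable [Fintype G] [DecidableEq G]

omit [Group G] in
lemma ofFn_equiv_eq_univ {d : ℕ} (e : Fin d ≃ G) :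
    (List.ofFn (fun r => e r) : Multiset G) = Finset.univ.val := by
  have hnd : (List.ofFn (fun r => e r)).Nodup := List.nodup_ofFn.mpr e.injective
  have h1 : (⟨(List.ofFn (fun r => e r) : Multiset G), hnd⟩ : Finset G) = Finset.univ := by
    apply Finset.eq_univ_of_forall
    intro x
    simp [Finset.mem_def, List.mem_ofFn]
    exact e.surjective x
  exact congrArg Finset.val h1

lemma univ_val_map_mul (g : G) :
    Multiset.map (· * g) (Finset.univ.val : Multiset G) = Finset.univ.val := by
  calc Multiset.map (· * g) Finset.univ.val
      = (Finset.map (Equiv.mulRight g).toEmbedding Finset.univ).val := by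
        rw [Finset.map_val]; rfl
    _ = Finset.univ.val := by rw [Finset.map_univ_equiv]

omit [Group G] [Fintype G] in
lemma image_eq_toFinset {n : ℕ} (f : Fin n → G) :
    Finset.univ.image f = (List.ofFn f : Multiset G).toFinset := by
  ext x
  simp [List.mem_ofFn, eq_comm]

end

/-- Let `G` be a group of order `d` and `m ≥ d`, and let `e : Fin d ≃ G` be an
enumeration `g_1, ..., g_d` of `G`. The map `S(G,m-d) → S(G,m)` sending
`[(h_1,...,h_{m-d})]` to `[(h_1,...,h_{m-d},g_1,...,g_d)]` is injective, and consequently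
`#S(G,m) - #S(G,m-d)` equals the cardinality of the set `S'(G,m)` of classes in `S(G,m)`
represented by tuples with at most `d - 1` distinct entries. -/
theorem stmt9 (d m : ℕ) (G : Type*) [Group G] [Finite G] [DecidableEq G]
    (hcard : Nat.card G = d) (hdm : d ≤ m) (e : Fin d ≃ G) :
    (∀ h h' : Fin (m - d) → G,
      Quot.mk (SGmRel G m)
          (fun i => Fin.append h (fun r => e r) (Fin.cast (by omega) i)) =
        Quot.mk (SGmRel G m)
          (fun i => Fin.append h' (fun r => e r) (Fin.cast (by omega) i)) →
      Quot.mk (SGmRel G (m - d)) h = Quot.mk (SGmRel G (m - d)) h') ∧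
    Nat.card (SGm G m) - Nat.card (SGm G (m - d)) =
      Nat.card {c : SGm G m // ∃ g : Fin m → G,
        Quot.mk (SGmRel G m) g = c ∧ (Finset.univ.image g).card ≤ d - 1} := by
  classical
  letI : Fintype G := Fintype.ofFinite G
  have pf : m = m - d + d := by omega
  set A : (Fin (m - d) → G) → (Fin m → G) :=
    fun h i => Fin.append h (fun r => e r) (Fin.cast pf i) with hA
  have hMA : ∀ h, (List.ofFn (A h) : Multiset G)
      = (List.ofFn h : Multiset G) + Finset.univ.val := by
    intro h
    show ((List.ofFn fun i => (Fin.append h fun r => e r) (Fin.cast pf i) : List G) : Multiset G) = _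
    rw [ofFn_cast_eq pf (Fin.append h (fun r => e r)), List.ofFn_fin_append, ← Multiset.coe_add,
      ofFn_equiv_eq_univ e]
  have hrel_iff' : ∀ h h' : Fin (m - d) → G,
      SGmRel G m (A h) (A h') ↔ SGmRel G (m - d) h h' := by
    intro h h'
    rw [sgm_rel_iff, sgm_rel_iff]
    constructor
    · rintro ⟨g, hg⟩
      refine ⟨g, ?_⟩
      rw [ofFn_mul_eq, hMA, hMA, Multiset.map_add, univ_val_map_mul] at hg
      rw [ofFn_mul_eq]
      exact add_right_cancel hg
    · rintro ⟨g, hg⟩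
      refine ⟨g, ?_⟩
      rw [ofFn_mul_eq] at hg
      rw [ofFn_mul_eq, hMA, hMA, Multiset.map_add, univ_val_map_mul, hg]
  have part1 : ∀ h h' : Fin (m - d) → G,
      Quot.mk (SGmRel G m) (A h) = Quot.mk (SGmRel G m) (A h') →
      Quot.mk (SGmRel G (m - d)) h = Quot.mk (SGmRel G (m - d)) h' := by
    intro h h' hq
    exact Quot.sound ((hrel_iff' h h').mp ((sgm_mk_eq_iff _ _).mp hq))
  refine ⟨part1, ?_⟩
  -- counting
  have hd1 : 1 ≤ d := hcard ▸ Nat.card_pos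
  have hcardG : Fintype.card G = d := by rw [← Nat.card_eq_fintype_card, hcard]
  have hcast2 : ∀ i : Fin m, Fin.cast pf.symm (Fin.cast pf i) = i := fun i => rfl
  have hcast3 : ∀ k : Fin (m - d + d), Fin.cast pf (Fin.cast pf.symm k) = k := fun k => rfl
  -- image of A h is everything
  have himA : ∀ h, Finset.univ.image (A h) = (Finset.univ : Finset G) := by
    intro h
    apply Finset.eq_univ_of_forall
    intro x
    simp only [Finset.mem_image]
    refine ⟨Fin.cast pf.symm (Fin.natAdd (m - d) (e.symm x)), Finset.mem_univ _, ?_⟩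
    show Fin.append h (fun r => e r) (Fin.cast pf (Fin.cast pf.symm _)) = x
    rw [hcast3, Fin.append_right]
    simp
  -- number of distinct values is invariant
  have hcard_inv : ∀ {a b : Fin m → G}, SGmRel G m a b →
      (Finset.univ.image b).card = (Finset.univ.image a).card := by
    intro a b hab
    obtain ⟨g, hg⟩ := (sgm_rel_iff a b).mp hab
    rw [image_eq_toFinset, image_eq_toFinset, hg, ofFn_mul_eq, Multiset.toFinset_map,
      Finset.card_image_of_injective _ (mul_left_injective g)]
  -- surjective representatives are in the range of A
  have hconstruct : ∀ a : Fin m → G, Function.Surjective a →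
      ∃ h, Quot.mk (SGmRel G m) (A h) = Quot.mk (SGmRel G m) a := by
    intro a ha
    set ι : Fin d → Fin m := fun r => (ha (e r)).choose with hι
    have hιa : ∀ r, a (ι r) = e r := fun r => (ha (e r)).choose_spec
    have hιinj : Function.Injective ι := fun r r' hrr =>
      e.injective (by rw [← hιa r, ← hιa r', hrr])
    set p : Fin d → Fin m := fun r => Fin.cast pf.symm (Fin.natAdd (m - d) r) with hp
    have hpinj : Function.Injective p := by
      intro r r' hrr
      have := congrArg Fin.val hrr
      simp only [hp, Fin.coe_cast, Fin.coe_natAdd] at this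
      exact Fin.ext (by omega)
    set E : {x // x ∈ Set.range p} ≃ {x // x ∈ Set.range ι} :=
      (Equiv.ofInjective p hpinj).symm.trans (Equiv.ofInjective ι hιinj) with hE
    set σ : Equiv.Perm (Fin m) := E.extendSubtype with hσ
    have hσp : ∀ r, σ (p r) = ι r := by
      intro r
      rw [hσ, E.extendSubtype_apply_of_mem (p r) ⟨r, rfl⟩, hE]
      simp [Equiv.ofInjective_symm_apply]
    set h : Fin (m - d) → G := fun j => a (σ (Fin.cast pf.symm (Fin.castAdd d j))) with hh
    have key : ∀ k : Fin (m - d + d),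
        Fin.append h (fun r => e r) k = a (σ (Fin.cast pf.symm k)) := by
      intro k
      refine Fin.addCases (fun j => ?_) (fun r => ?_) k
      · rw [Fin.append_left]
      · rw [Fin.append_right]
        have : Fin.cast pf.symm (Fin.natAdd (m - d) r) = p r := rfl
        rw [this, hσp, hιa]
    refine ⟨h, ?_⟩
    refine (Quot.sound (sgm_equiv.symm ⟨σ, 1, fun i => ?_⟩))
    rw [mul_one]
    show Fin.append h (fun r => e r) (Fin.cast pf i) = a (σ i)
    rw [key (Fin.cast pf i), hcast2]
  -- finiteness
  haveI : Finite (SGm G m) := Finite.of_surjective _ (Quot.exists_rep · )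
  haveI : Finite (SGm G (m - d)) := Finite.of_surjective _ (Quot.exists_rep ·)
  set F : SGm G (m - d) → SGm G m :=
    Quot.lift (fun h => Quot.mk (SGmRel G m) (A h))
      (fun h h' hr => Quot.sound ((hrel_iff' h h').mpr hr)) with hF
  have hFmk : ∀ h, F (Quot.mk _ h) = Quot.mk (SGmRel G m) (A h) := fun _ => rfl
  have hFinj : Function.Injective F := by
    intro x y
    induction x using Quot.ind with | _ h =>
    induction y using Quot.ind with | _ h' =>
    intro hxy
    exact part1 h h' hxy
  set S : Set (SGm G m) := {c | ∃ g : Fin m → G,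
      Quot.mk (SGmRel G m) g = c ∧ (Finset.univ.image g).card ≤ d - 1} with hS
  have hrange : Set.range F = Sᶜ := by
    ext c
    obtain ⟨a, rfl⟩ := Quot.exists_rep c
    simp only [Set.mem_range, Set.mem_compl_iff, hS, Set.mem_setOf_eq, not_exists]
    constructor
    · rintro ⟨x, hx⟩ ⟨g, hgq, hgc⟩
      obtain ⟨h, rfl⟩ := Quot.exists_rep x
      rw [hFmk] at hx
      have h1 : SGmRel G m (A h) g := (sgm_mk_eq_iff _ _).mp (hx.trans hgq.symm)
      have h2 : (Finset.univ.image g).card = (Finset.univ.image (A h)).card := hcard_inv h1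
      rw [himA, Finset.card_univ, hcardG] at h2
      omega
    · intro hnp
      have hna : ¬ (Quot.mk (SGmRel G m) a = Quot.mk (SGmRel G m) a ∧
          (Finset.univ.image a).card ≤ d - 1) := fun hh => hnp ⟨a, hh⟩
      have h1 : ¬ (Finset.univ.image a).card ≤ d - 1 := fun hc => hna ⟨rfl, hc⟩
      have h2 : (Finset.univ.image a).card ≤ d := by
        have := Finset.card_le_card (Finset.subset_univ (Finset.univ.image a))
        rwa [Finset.card_univ, hcardG] at this
      have h3 : (Finset.univ.image a).card = d := by omega
      have h4 : Finset.univ.image a = Finset.univ :=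
        Finset.eq_univ_of_card _ (by rw [h3, hcardG])
      have hasurj : Function.Surjective a := by
        intro x
        have hx : x ∈ Finset.univ.image a := h4 ▸ Finset.mem_univ x
        obtain ⟨i, _, hi⟩ := Finset.mem_image.mp hx
        exact ⟨i, hi⟩
      obtain ⟨h, hhq⟩ := hconstruct a hasurj
      exact ⟨Quot.mk _ h, hhq⟩
  have e1 : Nat.card (SGm G (m - d)) = (Set.range F).ncard := by
    rw [← Nat.card_coe_set_eq, Nat.card_range_of_injective hFinj]
  have e2 : S.ncard + Sᶜ.ncard = Nat.card (SGm G m) :=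
    Set.ncard_add_ncard_compl S
  have e3 : Nat.card {c : SGm G m // ∃ g : Fin m → G,
      Quot.mk (SGmRel G m) g = c ∧ (Finset.univ.image g).card ≤ d - 1} = S.ncard :=
    Nat.card_coe_set_eq S
  rw [e1, hrange, e3]
  omega
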